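/- Let A ∈ ℝ^{n×n} be nonsingular and H ∈ ℝ^{n×r}. If the n×r matrix Ĥ = T_A^T H (with T_A from the SVD of A) satisfies rank(AH) = rank(Ĥ) = r, then ‖(AH)⁺‖ ≤ ‖A⁺‖ · ‖Ĥ⁺‖. -/

import Mathlib

open Matrix

/-- The `j`-th largest singular value (1-indexed) of a real matrix, defined as the square
root of the `j`-th largest eigenvalue of `AᴴA`; it is `0` for `j` out of range. -/
noncomputable def singularValue {m n : ℕ} (A : Matrix (Fin m) (Fin n) ℝ) (j : ℕ) : ℝ :=
  if h : 1 ≤ j ∧ j ≤ n then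
    Real.sqrt ((Matrix.isHermitian_conjTranspose_mul_self A).eigenvalues
      (Tuple.sort (Matrix.isHermitian_conjTranspose_mul_self A).eigenvalues ⟨n - j, by omega⟩))
  else 0


/-- The Moore–Penrose pseudoinverse of a full-column-rank matrix: `A⁺ = (AᵀA)⁻¹ Aᵀ`. -/
noncomputable def pinvFCR {m n : ℕ} (A : Matrix (Fin m) (Fin n) ℝ) : Matrix (Fin n) (Fin m) ℝ :=
  (Aᵀ * A)⁻¹ * Aᵀ

section Helpers
variable {m q : ℕ}

lemma inner_eq_dot {q : ℕ} (a b : EuclideanSpace ℝ (Fin q)) :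
    (inner ℝ a b : ℝ) = (a : Fin q → ℝ) ⬝ᵥ (b : Fin q → ℝ) := by
  simp [PiLp.inner_apply, dotProduct, mul_comm]

lemma dot_mulVec_XtX (X : Matrix (Fin m) (Fin q) ℝ) (v x : Fin q → ℝ) :
    v ⬝ᵥ ((Xᴴ * X) *ᵥ x) = ((Xᴴ * X) *ᵥ v) ⬝ᵥ x := by
  have hsym : (Xᴴ * X)ᵀ = Xᴴ * X := by
    rw [← Matrix.conjTranspose_eq_transpose_of_trivial]
    exact Matrix.isHermitian_conjTranspose_mul_self X
  rw [Matrix.dotProduct_mulVec]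
  congr 1
  rw [← hsym, Matrix.vecMul_transpose, hsym]

lemma dot_X_mulVec (X : Matrix (Fin m) (Fin q) ℝ) (x y : Fin q → ℝ) :
    (X *ᵥ x) ⬝ᵥ (X *ᵥ y) = x ⬝ᵥ ((Xᴴ * X) *ᵥ y) := by
  rw [Matrix.dotProduct_mulVec x, ← Matrix.vecMul_vecMul, Matrix.vecMul_conjTranspose,
    ← Matrix.dotProduct_mulVec]
  simp

lemma expand_dot (X : Matrix (Fin m) (Fin q) ℝ) (x : Fin q → ℝ) :
    ∃ c : Fin q → ℝ, x ⬝ᵥ x = ∑ i, c i ^ 2 ∧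
      (X *ᵥ x) ⬝ᵥ (X *ᵥ x) = ∑ i, (Matrix.isHermitian_conjTranspose_mul_self X).eigenvalues i * c i ^ 2 := by
  set hB := Matrix.isHermitian_conjTranspose_mul_self X with hBdef
  set b := hB.eigenvectorBasis with hbdef
  set x' : EuclideanSpace ℝ (Fin q) := WithLp.toLp 2 x with hx'
  refine ⟨fun i => b.repr x' i, ?_, ?_⟩
  · have h1 : (inner ℝ x' x' : ℝ) = inner ℝ (b.repr x') (b.repr x') := (b.repr.inner_map_map x' x').symm
    have h2 : (inner ℝ x' x' : ℝ) = x ⬝ᵥ x := inner_eq_dot x' x'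
    rw [← h2, h1, inner_eq_dot]
    simp [dotProduct, sq]
  · have hkey : ∀ i, b.repr (WithLp.toLp 2 ((Xᴴ * X) *ᵥ x) : EuclideanSpace ℝ (Fin q)) i
        = hB.eigenvalues i * b.repr x' i := by
      intro i
      rw [OrthonormalBasis.repr_apply_apply, OrthonormalBasis.repr_apply_apply]
      rw [inner_eq_dot, inner_eq_dot]
      have hb : (Xᴴ * X) *ᵥ (b i : Fin q → ℝ) = hB.eigenvalues i • (b i : Fin q → ℝ) :=
        hB.mulVec_eigenvectorBasis i
      rw [dot_mulVec_XtX, hb]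
      have hsd : ∀ (a : ℝ) (v w : Fin q → ℝ), (a • v) ⬝ᵥ w = a * (v ⬝ᵥ w) := fun a v w => by
        simp [smul_dotProduct]
      exact hsd _ _ _
    have hXX : (X *ᵥ x) ⬝ᵥ (X *ᵥ x) = x ⬝ᵥ ((Xᴴ * X) *ᵥ x) := dot_X_mulVec X x x
    have h3 : x ⬝ᵥ ((Xᴴ * X) *ᵥ x)
        = (inner ℝ x' (WithLp.toLp 2 ((Xᴴ * X) *ᵥ x) : EuclideanSpace ℝ (Fin q)) : ℝ) := (inner_eq_dot x' (WithLp.toLp 2 ((Xᴴ * X) *ᵥ x))).symm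
    rw [hXX, h3, ← b.repr.inner_map_map, inner_eq_dot]
    simp only [dotProduct]
    refine Finset.sum_congr rfl fun i _ => ?_
    have h4 := hkey i
    rw [show ((b.repr (WithLp.toLp 2 ((Xᴴ * X) *ᵥ x) : EuclideanSpace ℝ (Fin q)))) i
      = hB.eigenvalues i * b.repr x' i from h4]
    ring

lemma eig_exists (X : Matrix (Fin m) (Fin q) ℝ) (i : Fin q) :
    ∃ v : Fin q → ℝ, v ⬝ᵥ v = 1 ∧
      (Xᵀ * X) *ᵥ v = (Matrix.isHermitian_conjTranspose_mul_self X).eigenvalues i • v := by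
  set hB := Matrix.isHermitian_conjTranspose_mul_self X
  set b := hB.eigenvectorBasis
  have hct : Xᴴ = Xᵀ := Matrix.conjTranspose_eq_transpose_of_trivial X
  refine ⟨(b i : Fin q → ℝ), ?_, by rw [← hct]; exact hB.mulVec_eigenvectorBasis i⟩
  have h1 : (inner ℝ (b i) (b i) : ℝ) = 1 := by
    have hn := b.orthonormal.1 i
    rw [real_inner_self_eq_norm_sq, hn]; norm_num
  rw [← inner_eq_dot]
  exact h1

lemma eig_val_eq (X : Matrix (Fin m) (Fin q) ℝ) {v : Fin q → ℝ} {a : ℝ}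
    (hv : v ⬝ᵥ v = 1) (h : (Xᵀ * X) *ᵥ v = a • v) :
    (X *ᵥ v) ⬝ᵥ (X *ᵥ v) = a := by
  have hct : Xᴴ = Xᵀ := Matrix.conjTranspose_eq_transpose_of_trivial X
  rw [dot_X_mulVec, hct, h]
  simp [dotProduct_smul, hv]

lemma dot_self_nonneg (v : Fin q → ℝ) : 0 ≤ v ⬝ᵥ v :=
  Finset.sum_nonneg fun i _ => mul_self_nonneg _

lemma dot_self_pos {v : Fin q → ℝ} (hv : v ≠ 0) : 0 < v ⬝ᵥ v :=
  (dot_self_nonneg v).lt_of_ne' (fun h => hv (dotProduct_self_eq_zero.mp h))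

lemma sv_nonneg (X : Matrix (Fin m) (Fin q) ℝ) (j : ℕ) : 0 ≤ singularValue X j := by
  unfold singularValue
  split
  · exact Real.sqrt_nonneg _
  · exact le_refl 0

lemma sorted_top_ge (f : Fin q → ℝ) (hq : 1 ≤ q) (i : Fin q) :
    f i ≤ f (Tuple.sort f ⟨q - 1, by omega⟩) := by
  have hmono := Tuple.monotone_sort f
  have h1 : f i = (f ∘ Tuple.sort f) ((Tuple.sort f)⁻¹ i) := by simp
  rw [h1]
  exact hmono (by
    show ((Tuple.sort f)⁻¹ i : Fin q).1 ≤ q - 1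
    omega)

lemma ev_nonneg (X : Matrix (Fin m) (Fin q) ℝ) (i : Fin q) :
    0 ≤ (Matrix.isHermitian_conjTranspose_mul_self X).eigenvalues i := by
  obtain ⟨v, hv, h⟩ := eig_exists X i
  rw [← eig_val_eq X hv h]
  exact dot_self_nonneg _

lemma sv_one_sq_eq (X : Matrix (Fin m) (Fin q) ℝ) (hq : 1 ≤ q) :
    (singularValue X 1) ^ 2 = (Matrix.isHermitian_conjTranspose_mul_self X).eigenvalues
      (Tuple.sort (Matrix.isHermitian_conjTranspose_mul_self X).eigenvalues ⟨q - 1, by omega⟩) := by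
  unfold singularValue
  rw [dif_pos ⟨le_refl 1, hq⟩, Real.sq_sqrt (ev_nonneg X _)]

lemma sv_one_sq_bound (hq : 1 ≤ q) (X : Matrix (Fin m) (Fin q) ℝ) (x : Fin q → ℝ) :
    (X *ᵥ x) ⬝ᵥ (X *ᵥ x) ≤ (singularValue X 1) ^ 2 * (x ⬝ᵥ x) := by
  obtain ⟨c, h1, h2⟩ := expand_dot X x
  rw [h2, h1, sv_one_sq_eq X hq, Finset.mul_sum]
  exact Finset.sum_le_sum fun i _ =>
    mul_le_mul_of_nonneg_right (sorted_top_ge _ hq i) (sq_nonneg _)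

lemma sv_one_attained (hq : 1 ≤ q) (X : Matrix (Fin m) (Fin q) ℝ) :
    ∃ v : Fin q → ℝ, v ⬝ᵥ v = 1 ∧ (X *ᵥ v) ⬝ᵥ (X *ᵥ v) = (singularValue X 1) ^ 2 := by
  obtain ⟨v, hv, h⟩ := eig_exists X
    (Tuple.sort (Matrix.isHermitian_conjTranspose_mul_self X).eigenvalues ⟨q - 1, by omega⟩)
  exact ⟨v, hv, by rw [eig_val_eq X hv h, sv_one_sq_eq X hq]⟩

lemma min_lb (X : Matrix (Fin m) (Fin q) ℝ) (a : ℝ)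
    (hmin : ∀ i, a ≤ (Matrix.isHermitian_conjTranspose_mul_self X).eigenvalues i)
    (x : Fin q → ℝ) : a * (x ⬝ᵥ x) ≤ (X *ᵥ x) ⬝ᵥ (X *ᵥ x) := by
  obtain ⟨c, h1, h2⟩ := expand_dot X x
  rw [h2, h1, Finset.mul_sum]
  exact Finset.sum_le_sum fun i _ => mul_le_mul_of_nonneg_right (hmin i) (sq_nonneg _)

lemma eig_pos {M : Matrix (Fin m) (Fin q) ℝ} (hinj : Function.Injective M.mulVec)
    {v : Fin q → ℝ} {a : ℝ} (hv : v ⬝ᵥ v = 1) (h : (Mᵀ * M) *ᵥ v = a • v) : 0 < a := by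
  rw [← eig_val_eq M hv h]
  apply dot_self_pos
  intro h0
  have hv0 : v = 0 := hinj (by rw [h0, Matrix.mulVec_zero])
  rw [hv0] at hv
  simp [dotProduct] at hv

lemma rank_eq_card_inj (M : Matrix (Fin m) (Fin q) ℝ) (h : M.rank = q) :
    Function.Injective M.mulVec := by
  have h2 := LinearMap.finrank_range_add_finrank_ker M.mulVecLin
  rw [Matrix.rank] at h
  have hdom : Module.finrank ℝ (Fin q → ℝ) = q := by simp
  have hker : Module.finrank ℝ (LinearMap.ker M.mulVecLin) = 0 := by omega
  have hbot : LinearMap.ker M.mulVecLin = ⊥ := Submodule.finrank_eq_zero.mp hker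
  have hinj := LinearMap.ker_eq_bot.mp hbot
  intro x y hxy
  exact hinj (by simpa [Matrix.mulVecLin_apply] using hxy)

lemma pinv_sv_sq_eq (hm : 1 ≤ m) (M : Matrix (Fin m) (Fin q) ℝ)
    (hinj : Function.Injective M.mulVec) (a : ℝ)
    (hmem : ∃ v : Fin q → ℝ, v ⬝ᵥ v = 1 ∧ (Mᵀ * M) *ᵥ v = a • v)
    (hlb : ∀ x : Fin q → ℝ, a * (x ⬝ᵥ x) ≤ (M *ᵥ x) ⬝ᵥ (M *ᵥ x)) :
    (singularValue (pinvFCR M) 1) ^ 2 = 1 / a := by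
  obtain ⟨v₀, hv₀, hev₀⟩ := hmem
  have ha_eq : (M *ᵥ v₀) ⬝ᵥ (M *ᵥ v₀) = a := eig_val_eq M hv₀ hev₀
  have hapos : 0 < a := eig_pos hinj hv₀ hev₀
  have hker : ∀ z, (Mᵀ * M) *ᵥ z = 0 → M *ᵥ z = 0 := by
    intro z hz
    have hct : Mᴴ = Mᵀ := Matrix.conjTranspose_eq_transpose_of_trivial M
    have h1 : (M *ᵥ z) ⬝ᵥ (M *ᵥ z) = 0 := by
      rw [dot_X_mulVec, hct, hz, dotProduct_zero]
    exact dotProduct_self_eq_zero.mp h1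
  have hMTM_unit : IsUnit (Mᵀ * M) := by
    rw [← Matrix.mulVec_injective_iff_isUnit]
    intro x y hxy
    apply hinj
    have hsub : (Mᵀ * M) *ᵥ (x - y) = 0 := by
      rw [Matrix.mulVec_sub, hxy, sub_self]
    have := hker _ hsub
    rw [Matrix.mulVec_sub, sub_eq_zero] at this
    exact this
  have hdet : IsUnit (Mᵀ * M).det := (Matrix.isUnit_iff_isUnit_det _).mp hMTM_unit
  have hPM : ∀ x, pinvFCR M *ᵥ (M *ᵥ x) = x := by
    intro x
    rw [Matrix.mulVec_mulVec]
    have h : pinvFCR M * M = 1 := by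
      rw [pinvFCR, Matrix.mul_assoc, Matrix.nonsing_inv_mul _ hdet]
    rw [h, Matrix.one_mulVec]
  have hMP : ∀ y, (Mᵀ * M) *ᵥ (pinvFCR M *ᵥ y) = Mᵀ *ᵥ y := by
    intro y
    rw [Matrix.mulVec_mulVec]
    have h : (Mᵀ * M) * pinvFCR M = Mᵀ := by
      rw [pinvFCR, ← Matrix.mul_assoc, Matrix.mul_nonsing_inv _ hdet, Matrix.one_mul]
    rw [h]
  have hub : (singularValue (pinvFCR M) 1) ^ 2 ≤ 1 / a := by
    obtain ⟨w, hw, hws⟩ := sv_one_attained hm (pinvFCR M)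
    set x := pinvFCR M *ᵥ w with hx
    set s := (M *ᵥ x) ⬝ᵥ (M *ᵥ x) with hs
    have h1 : a * (singularValue (pinvFCR M) 1) ^ 2 ≤ s := by
      rw [← hws]; exact hlb x
    have h2 : s = (M *ᵥ x) ⬝ᵥ w := by
      have hct : Mᴴ = Mᵀ := Matrix.conjTranspose_eq_transpose_of_trivial M
      rw [hs, dot_X_mulVec, hct, hMP w, Matrix.dotProduct_mulVec, Matrix.vecMul_transpose]
    have hCS : s ^ 2 ≤ s * 1 := by
      have hcs := Finset.sum_mul_sq_le_sq_mul_sq Finset.univ (M *ᵥ x) w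
      calc s ^ 2 = ((M *ᵥ x) ⬝ᵥ w) ^ 2 := by rw [h2]
        _ ≤ ((M *ᵥ x) ⬝ᵥ (M *ᵥ x)) * (w ⬝ᵥ w) := by
            simpa [dotProduct, sq] using hcs
        _ = s * 1 := by rw [hw, hs]
    have hs_nonneg : 0 ≤ s := dot_self_nonneg _
    have hs_le1 : s ≤ 1 := by nlinarith
    rw [le_div_iff₀ hapos]
    nlinarith
  have hlb2 : 1 / a ≤ (singularValue (pinvFCR M) 1) ^ 2 := by
    have h1 := sv_one_sq_bound hm (pinvFCR M) (M *ᵥ v₀)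
    rw [hPM v₀, hv₀, ha_eq] at h1
    rw [div_le_iff₀ hapos]
    linarith
  linarith

end Helpers

/-- Let `A ∈ ℝ^{n×n}` be nonsingular with SVD `A = S Σ Tᵀ` and `H ∈ ℝ^{n×r}`. If
`Ĥ = Tᵀ H` satisfies `rank(A H) = rank Ĥ = r`, then `‖(A H)⁺‖ ≤ ‖A⁺‖ · ‖Ĥ⁺‖`
(spectral norms, `M⁺` the Moore–Penrose pseudoinverse of a full-column-rank matrix). -/
theorem pinv_norm_mul_le
    {n r : ℕ} (hr : r ≤ n) (A : Matrix (Fin n) (Fin n) ℝ) (hA : IsUnit A.det)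
    (S T : Matrix (Fin n) (Fin n) ℝ) (hS : Sᵀ * S = 1) (hT : Tᵀ * T = 1)
    (hSVD : A = S * Matrix.diagonal (fun i : Fin n => singularValue A (i.1 + 1)) * Tᵀ)
    (H : Matrix (Fin n) (Fin r) ℝ)
    (h1 : (A * H).rank = r) (h2 : (Tᵀ * H).rank = r) :
    singularValue (pinvFCR (A * H)) 1 ≤
      singularValue (pinvFCR A) 1 * singularValue (pinvFCR (Tᵀ * H)) 1 := by
  rcases Nat.eq_zero_or_pos n with hn0 | hn
  · subst hn0
    simp [singularValue]
  rcases Nat.eq_zero_or_pos r with hr0 | hrpos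
  · subst hr0
    have h0 : singularValue (pinvFCR (A * H)) 1 = 0 := by
      obtain ⟨v, hv, h⟩ := sv_one_attained hn (pinvFCR (A * H))
      have hz : (pinvFCR (A * H) *ᵥ v) ⬝ᵥ (pinvFCR (A * H) *ᵥ v) = 0 := by
        simp [dotProduct]
      rw [hz] at h
      have hnn := sv_nonneg (pinvFCR (A * H)) 1
      nlinarith
    rw [h0]
    exact mul_nonneg (sv_nonneg _ _) (sv_nonneg _ _)
  -- main case
  have hAinj : Function.Injective A.mulVec :=
    Matrix.mulVec_injective_iff_isUnit.mpr ((Matrix.isUnit_iff_isUnit_det A).mpr hA)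
  have hHinj : Function.Injective (Tᵀ * H).mulVec := rank_eq_card_inj _ h2
  have hAHinj : Function.Injective (A * H).mulVec := rank_eq_card_inj _ h1
  have hTT : T * Tᵀ = 1 := mul_eq_one_comm.mp hT
  -- minimum eigenvalues
  obtain ⟨ia, -, hia⟩ := Finset.exists_min_image Finset.univ
    (Matrix.isHermitian_conjTranspose_mul_self A).eigenvalues
    (Finset.univ_nonempty_iff.mpr ⟨⟨0, hn⟩⟩)
  obtain ⟨ih, -, hih⟩ := Finset.exists_min_image Finset.univ
    (Matrix.isHermitian_conjTranspose_mul_self (Tᵀ * H)).eigenvalues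
    (Finset.univ_nonempty_iff.mpr ⟨⟨0, hrpos⟩⟩)
  obtain ⟨ig, -, hig⟩ := Finset.exists_min_image Finset.univ
    (Matrix.isHermitian_conjTranspose_mul_self (A * H)).eigenvalues
    (Finset.univ_nonempty_iff.mpr ⟨⟨0, hrpos⟩⟩)
  set a := (Matrix.isHermitian_conjTranspose_mul_self A).eigenvalues ia with ha_def
  set b := (Matrix.isHermitian_conjTranspose_mul_self (Tᵀ * H)).eigenvalues ih with hb_def
  set g := (Matrix.isHermitian_conjTranspose_mul_self (A * H)).eigenvalues ig with hg_def
  obtain ⟨va, hva, heva⟩ := eig_exists A ia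
  obtain ⟨vb, hvb, hevb⟩ := eig_exists (Tᵀ * H) ih
  obtain ⟨vg, hvg, hevg⟩ := eig_exists (A * H) ig
  have hapos : 0 < a := eig_pos hAinj hva heva
  have hbpos : 0 < b := eig_pos hHinj hvb hevb
  have hgpos : 0 < g := eig_pos hAHinj hvg hevg
  have ha_lb : ∀ x : Fin n → ℝ, a * (x ⬝ᵥ x) ≤ (A *ᵥ x) ⬝ᵥ (A *ᵥ x) :=
    min_lb A a (fun i => hia i (Finset.mem_univ i))
  have hb_lb : ∀ x : Fin r → ℝ, b * (x ⬝ᵥ x) ≤ ((Tᵀ * H) *ᵥ x) ⬝ᵥ ((Tᵀ * H) *ᵥ x) :=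
    min_lb (Tᵀ * H) b (fun i => hih i (Finset.mem_univ i))
  -- norm preservation by Tᵀ
  have hTnorm : ∀ w : Fin n → ℝ, (Tᵀ *ᵥ w) ⬝ᵥ (Tᵀ *ᵥ w) = w ⬝ᵥ w := by
    intro w
    rw [dot_X_mulVec]
    have hc : (Tᵀ)ᴴ = T := by
      rw [Matrix.conjTranspose_eq_transpose_of_trivial, Matrix.transpose_transpose]
    rw [hc, hTT, Matrix.one_mulVec]
  -- claim 3 : a * b ≤ g
  have hab_g : a * b ≤ g := by
    have hg_eq : ((A * H) *ᵥ vg) ⬝ᵥ ((A * H) *ᵥ vg) = g := eig_val_eq (A * H) hvg hevg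
    have step1 : b ≤ (H *ᵥ vg) ⬝ᵥ (H *ᵥ vg) := by
      have := hb_lb vg
      rw [hvg, mul_one] at this
      have hh : (Tᵀ * H) *ᵥ vg = Tᵀ *ᵥ (H *ᵥ vg) := (Matrix.mulVec_mulVec _ _ _).symm
      rw [hh, hTnorm] at this
      exact this
    have step2 : a * ((H *ᵥ vg) ⬝ᵥ (H *ᵥ vg)) ≤ g := by
      have := ha_lb (H *ᵥ vg)
      rw [Matrix.mulVec_mulVec] at this
      rw [← hg_eq]
      exact this
    calc a * b ≤ a * ((H *ᵥ vg) ⬝ᵥ (H *ᵥ vg)) :=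
          mul_le_mul_of_nonneg_left step1 hapos.le
      _ ≤ g := step2
  -- the three pseudoinverse norms
  have e1 : (singularValue (pinvFCR (A * H)) 1) ^ 2 = 1 / g :=
    pinv_sv_sq_eq hn (A * H) hAHinj g ⟨vg, hvg, hevg⟩
      (min_lb (A * H) g (fun i => hig i (Finset.mem_univ i)))
  have e2 : (singularValue (pinvFCR A) 1) ^ 2 = 1 / a :=
    pinv_sv_sq_eq hn A hAinj a ⟨va, hva, heva⟩ ha_lb
  have e3 : (singularValue (pinvFCR (Tᵀ * H)) 1) ^ 2 = 1 / b :=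
    pinv_sv_sq_eq hn (Tᵀ * H) hHinj b ⟨vb, hvb, hevb⟩ hb_lb
  set s := singularValue (pinvFCR (A * H)) 1
  set p := singularValue (pinvFCR A) 1
  set t := singularValue (pinvFCR (Tᵀ * H)) 1
  have hs := sv_nonneg (pinvFCR (A * H)) 1
  have hp := sv_nonneg (pinvFCR A) 1
  have ht := sv_nonneg (pinvFCR (Tᵀ * H)) 1
  have key : s ^ 2 ≤ (p * t) ^ 2 := by
    have h1g : 1 / g ≤ 1 / (a * b) :=
      one_div_le_one_div_of_le (mul_pos hapos hbpos) hab_g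
    have : (p * t) ^ 2 = 1 / (a * b) := by
      rw [mul_pow, e2, e3, div_mul_div_comm, one_mul]
    rw [e1, this]
    exact h1g
  nlinarith [mul_nonneg hp ht]
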